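/- Domination–sequence lemma: Suppose there is an envy-free partial allocation X with remainder R, and a sequence of n−1 agents A_2, …, A_n such that A_i dominates A_j whenever 2 ≤ i < j. If the remaining agent A_1 partitions R into n pieces of equal value to A_1, and the agents take pieces in the order A_n, A_{n−1}, …, A_2, A_1, each taking a piece of maximal value to themselves among those remaining, then the combined allocation of the entire cake is envy-free. -/

import Mathlib

open MeasureTheory Set
open scoped ENNReal

/-- Domination–sequence lemma: given an envy-free partial allocation `X` with remainder
`R`, and a sequence of agents `1,…,n-1` (agent `0` playing the role of `A_1`) such that
agent `i` dominates agent `j` whenever `1 ≤ i < j`, if agent `0` partitions `R` into `n`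
pieces of equal value to itself and the agents take best pieces in decreasing index
order (each agent's chosen piece is at least as valuable to it as any piece chosen by a
later-choosing agent), then the combined allocation of the entire cake is envy-free. -/
theorem domination_sequence {α : Type*} [MeasurableSpace α] (n : ℕ)
    (V : Fin (n+1) → Measure α) [∀ i, IsProbabilityMeasure (V i)]
    (X : Fin (n+1) → Set α) (hXmeas : ∀ i, MeasurableSet (X i))
    (hXdisj : Pairwise fun i j => Disjoint (X i) (X j))
    (R : Set α) (hRmeas : MeasurableSet R)
    (hR : R = univ \ ⋃ i, X i)
    (hXEF : ∀ i j : Fin (n+1), V i (X j) ≤ V i (X i))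
    -- agent i dominates agent j whenever 1 ≤ i < j:
    (hdom : ∀ i j : Fin (n+1), 0 < i → i < j → V i (X j) + V i R ≤ V i (X i))
    -- agent 0 partitions R into n pieces of equal value to itself:
    (Y : Fin (n+1) → Set α) (hYmeas : ∀ k, MeasurableSet (Y k))
    (hYsub : ∀ k, Y k ⊆ R)
    (hYdisj : Pairwise fun k l => Disjoint (Y k) (Y l))
    (hYcover : (⋃ k, Y k) = R)
    (hYeq : ∀ k, V 0 (Y k) = V 0 R / (n+1))
    -- σ assigns to each agent its chosen piece; larger indices choose earlier, and each
    -- agent's piece is best among those chosen by later-choosing (smaller-index) agents: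
    (σ : Fin (n+1) → Fin (n+1)) (hσ : Function.Bijective σ)
    (hchoice : ∀ i j : Fin (n+1), j < i → V i (Y (σ j)) ≤ V i (Y (σ i))) :
    ∀ i j : Fin (n+1), V i (X j ∪ Y (σ j)) ≤ V i (X i ∪ Y (σ i)) := by
  have hXY : ∀ a b : Fin (n+1), Disjoint (X a) (Y b) := by
    intro a b
    refine Set.disjoint_left.mpr fun x hx hx' => ?_
    have := hYsub b hx'
    rw [hR] at this
    exact this.2 (Set.mem_iUnion.mpr ⟨a, hx⟩)
  have hU : ∀ i a : Fin (n+1), V i (X a ∪ Y (σ a)) = V i (X a) + V i (Y (σ a)) := by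
    intro i a
    exact measure_union (hXY a (σ a)) (hYmeas (σ a))
  intro i j
  rw [hU, hU]
  rcases eq_or_lt_of_le (Fin.zero_le i) with h0 | h0
  · subst h0
    rw [hYeq, hYeq]
    exact add_le_add_left (hXEF 0 j) _
  · rcases lt_trichotomy j i with hji | hji | hji
    · exact add_le_add (hXEF i j) (hchoice i j hji)
    · subst hji; exact le_rfl
    · calc V i (X j) + V i (Y (σ j)) ≤ V i (X j) + V i R :=
            add_le_add_right (measure_mono (hYsub (σ j))) _
        _ ≤ V i (X i) := hdom i j h0 hji
        _ ≤ V i (X i) + V i (Y (σ i)) := le_self_add
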